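/- The qubit subalgebra is a factor: if a bounded operator T on H commutes with each of a₁, a₂, a₃ and also commutes with every bounded operator S on H that commutes with each of a₁, a₂, a₃, then there exists c ∈ ℂ with T = c • (identity on H). Equivalently, the intersection of the centralizer of {a₁,a₂,a₃} with its own centralizer consists exactly of the scalar multiples of the identity. -/

import Mathlib

open Complex

noncomputable section

/-- The Hilbert space `H := ℓ²(ℤ, ℂ)`. -/
abbrev H : Type := lp (fun _ : ℤ => ℂ) 2

/-- The orthonormal basis vectors `e ℓ = lp.single 2 ℓ 1`. -/
def e (ℓ : ℤ) : H := lp.single 2 ℓ 1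

/-- `a₃ := U(π)`. -/
def a₃ (U : ℝ → (H →L[ℂ] H)) : H →L[ℂ] H := U Real.pi

/-- `a₊ := (1/2) • ((1 − U(π)) ∘ V*)`. -/
def aPlus (U : ℝ → (H →L[ℂ] H)) (V : unitary (H →L[ℂ] H)) : H →L[ℂ] H :=
  ((1 : ℂ) / 2) • ((1 - U Real.pi) ∘L star (V : H →L[ℂ] H))

/-- `a₋ := (1/2) • ((1 + U(π)) ∘ V)`. -/
def aMinus (U : ℝ → (H →L[ℂ] H)) (V : unitary (H →L[ℂ] H)) : H →L[ℂ] H :=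
  ((1 : ℂ) / 2) • ((1 + U Real.pi) ∘L (V : H →L[ℂ] H))

/-- `a₁ := a₊ + a₋`. -/
def a₁ (U : ℝ → (H →L[ℂ] H)) (V : unitary (H →L[ℂ] H)) : H →L[ℂ] H :=
  aPlus U V + aMinus U V

/-- `a₂ := −i•a₊ + i•a₋`. -/
def a₂ (U : ℝ → (H →L[ℂ] H)) (V : unitary (H →L[ℂ] H)) : H →L[ℂ] H :=
  (-Complex.I) • aPlus U V + Complex.I • aMinus U V
section Aux

/-- Two bounded operators agreeing on the basis vectors are equal. -/
lemma ext_basis {A B : H →L[ℂ] H} (h : ∀ ℓ, A (e ℓ) = B (e ℓ)) : A = B := by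
  refine ContinuousLinearMap.ext fun f => ?_
  have hs : HasSum (fun i => lp.single 2 i (f i)) f :=
    lp.hasSum_single ENNReal.ofNat_ne_top f
  have hsingle : ∀ i : ℤ, lp.single 2 i (f i) = f i • e i := by
    intro i
    have := lp.single_smul (E := fun _ : ℤ => ℂ) 2 i (f i) (1 : ℂ)
    simp only [smul_eq_mul, mul_one] at this
    simpa [e] using this
  have hA := hs.mapL A
  have hB := hs.mapL B
  refine hA.unique ?_
  convert hB using 2 with i
  simp [hsingle, h i]

lemma e_coord (ℓ j : ℤ) : (e ℓ : ∀ _ : ℤ, ℂ) j = if j = ℓ then 1 else 0 := by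
  simp [e, lp.single_apply, Pi.single_apply]

lemma inner_e (j ℓ : ℤ) : (inner ℂ (e j) (e ℓ) : ℂ) = if j = ℓ then 1 else 0 := by
  rw [show e j = lp.single 2 j (1:ℂ) from rfl, lp.inner_single_left]
  simp [e_coord, eq_comm]

section Ops
variable (U : ℝ → (H →L[ℂ] H)) (V : unitary (H →L[ℂ] H))
  (hU : ∀ (θ : ℝ) (ℓ : ℤ), U θ (e ℓ) = Complex.exp (Complex.I * ℓ * θ) • e ℓ)
  (hV : ∀ ℓ : ℤ, (V : H →L[ℂ] H) (e ℓ) = e (ℓ + 1))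

lemma expI_even (k : ℤ) :
    Complex.exp (Complex.I * ((k + k : ℤ) : ℂ) * (Real.pi : ℂ)) = 1 := by
  rw [show Complex.I * ((k + k : ℤ) : ℂ) * (Real.pi : ℂ)
      = (k : ℂ) * (2 * (Real.pi : ℂ) * Complex.I) by push_cast; ring]
  exact Complex.exp_int_mul_two_pi_mul_I k

lemma expI_odd (k : ℤ) :
    Complex.exp (Complex.I * ((2 * k + 1 : ℤ) : ℂ) * (Real.pi : ℂ)) = -1 := by
  rw [show Complex.I * ((2 * k + 1 : ℤ) : ℂ) * (Real.pi : ℂ)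
      = (k : ℂ) * (2 * (Real.pi : ℂ) * Complex.I) + (Real.pi : ℂ) * Complex.I by
        push_cast; ring,
    Complex.exp_add, Complex.exp_int_mul_two_pi_mul_I, Complex.exp_pi_mul_I, one_mul]

include hU in
lemma a₃_even (k : ℤ) : a₃ U (e (k + k)) = e (k + k) := by
  rw [a₃, hU, expI_even, one_smul]

include hU in
lemma a₃_odd (k : ℤ) : a₃ U (e (2 * k + 1)) = -(e (2 * k + 1)) := by
  rw [a₃, hU, expI_odd, neg_one_smul]

include hV in
lemma Vstar_e (ℓ : ℤ) : (star (V : H →L[ℂ] H)) (e ℓ) = e (ℓ - 1) := by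
  have h1 : star (V : H →L[ℂ] H) * (V : H →L[ℂ] H) = 1 := V.2.1
  have h2 := congrArg (fun A : H →L[ℂ] H => A (e (ℓ - 1))) h1
  simp only [ContinuousLinearMap.mul_apply, ContinuousLinearMap.one_apply] at h2
  rw [hV, sub_add_cancel] at h2
  exact h2

include hU hV in
lemma aPlus_even (k : ℤ) : aPlus U V (e (k + k)) = e (k + k - 1) := by
  rw [aPlus, ContinuousLinearMap.smul_apply, ContinuousLinearMap.comp_apply,
    Vstar_e V hV, ContinuousLinearMap.sub_apply, ContinuousLinearMap.one_apply,
    show (k + k - 1 : ℤ) = 2 * (k - 1) + 1 by ring, hU, expI_odd, neg_one_smul,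
    sub_neg_eq_add]
  rw [show (e (2 * (k - 1) + 1) + e (2 * (k - 1) + 1)) = (2 : ℂ) • e (2 * (k - 1) + 1) by
    rw [two_smul]]
  rw [smul_smul]
  norm_num

include hU hV in
lemma aPlus_odd (k : ℤ) : aPlus U V (e (2 * k + 1)) = 0 := by
  rw [aPlus, ContinuousLinearMap.smul_apply, ContinuousLinearMap.comp_apply,
    Vstar_e V hV, ContinuousLinearMap.sub_apply, ContinuousLinearMap.one_apply,
    show (2 * k + 1 - 1 : ℤ) = k + k by ring, hU, expI_even, one_smul, sub_self,
    smul_zero]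

include hU hV in
lemma aMinus_even (k : ℤ) : aMinus U V (e (k + k)) = 0 := by
  rw [aMinus, ContinuousLinearMap.smul_apply, ContinuousLinearMap.comp_apply,
    hV, ContinuousLinearMap.add_apply, ContinuousLinearMap.one_apply,
    show (k + k + 1 : ℤ) = 2 * k + 1 by ring, hU, expI_odd, neg_one_smul,
    add_neg_cancel, smul_zero]

include hU hV in
lemma aMinus_odd (k : ℤ) : aMinus U V (e (2 * k + 1)) = e (2 * k + 2) := by
  rw [aMinus, ContinuousLinearMap.smul_apply, ContinuousLinearMap.comp_apply,
    hV, ContinuousLinearMap.add_apply, ContinuousLinearMap.one_apply,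
    show (2 * k + 1 + 1 : ℤ) = (k + 1) + (k + 1) by ring, hU, expI_even, one_smul]
  rw [show (e ((k+1) + (k+1)) + e ((k+1)+(k+1))) = (2 : ℂ) • e ((k+1)+(k+1)) by
    rw [two_smul]]
  rw [smul_smul]
  norm_num
  rw [show ((k:ℤ)+1 + (k+1)) = 2*k+2 by ring]

end Ops

end Aux
section Aux2

variable (U : ℝ → (H →L[ℂ] H)) (V : unitary (H →L[ℂ] H))

/-- Shift by `+2`, an element of the commutant. -/
def Wop : H →L[ℂ] H := (V : H →L[ℂ] H) * (V : H →L[ℂ] H)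

/-- Shift by `-2`, an element of the commutant. -/
def Wst : H →L[ℂ] H := star (V : H →L[ℂ] H) * star (V : H →L[ℂ] H)

/-- Projection onto the block spanned by `e (-1), e 0`, an element of the commutant. -/
def Pop : H →L[ℂ] H :=
  (innerSL ℂ (e (-1))).smulRight (e (-1)) + (innerSL ℂ (e 0)).smulRight (e 0)

variable (hU : ∀ (θ : ℝ) (ℓ : ℤ), U θ (e ℓ) = Complex.exp (Complex.I * ℓ * θ) • e ℓ)
  (hV : ∀ ℓ : ℤ, (V : H →L[ℂ] H) (e ℓ) = e (ℓ + 1))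

include hV in
lemma Wop_e (ℓ : ℤ) : Wop V (e ℓ) = e (ℓ + 2) := by
  rw [Wop, ContinuousLinearMap.mul_apply, hV, hV]; congr 1; ring

include hV in
lemma Wst_e (ℓ : ℤ) : Wst V (e ℓ) = e (ℓ - 2) := by
  rw [Wst, ContinuousLinearMap.mul_apply, Vstar_e V hV, Vstar_e V hV]; congr 1; ring

lemma Pop_apply (f : H) :
    Pop f = (inner ℂ (e (-1)) f : ℂ) • e (-1) + (inner ℂ (e 0) f : ℂ) • e 0 := by
  simp [Pop]

lemma Pop_e (ℓ : ℤ) :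
    Pop (e ℓ) = (if (-1 : ℤ) = ℓ then (1:ℂ) else 0) • e (-1)
      + (if (0 : ℤ) = ℓ then (1:ℂ) else 0) • e 0 := by
  rw [Pop_apply, inner_e, inner_e]

include hU hV in
lemma aPlus_em1 : aPlus U V (e (-1)) = 0 := by
  simpa using aPlus_odd U V hU hV (-1)

include hU hV in
lemma aPlus_e0 : aPlus U V (e 0) = e (-1) := by
  simpa using aPlus_even U V hU hV 0

include hU hV in
lemma aMinus_em1 : aMinus U V (e (-1)) = e 0 := by
  simpa using aMinus_odd U V hU hV (-1)

include hU hV in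
lemma aMinus_e0 : aMinus U V (e 0) = 0 := by
  simpa using aMinus_even U V hU hV 0

include hU in
lemma a₃_em1 : a₃ U (e (-1)) = -(e (-1)) := by
  simpa using a₃_odd U hU (-1)

include hU in
lemma a₃_e0 : a₃ U (e 0) = e 0 := by
  simpa using a₃_even U hU 0

include hU hV in
lemma W_aPlus : Wop V ∘L aPlus U V = aPlus U V ∘L Wop V := by
  apply ext_basis; intro ℓ
  simp only [ContinuousLinearMap.comp_apply]
  rcases Int.even_or_odd ℓ with ⟨k, rfl⟩ | ⟨k, rfl⟩
  · rw [aPlus_even U V hU hV k, Wop_e V hV, Wop_e V hV,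
      show (k + k + 2 : ℤ) = (k+1) + (k+1) by ring, aPlus_even U V hU hV (k+1)]
    congr 1; ring
  · rw [aPlus_odd U V hU hV k, Wop_e V hV,
      show (2*k + 1 + 2 : ℤ) = 2*(k+1) + 1 by ring, aPlus_odd U V hU hV (k+1), map_zero]

include hU hV in
lemma W_aMinus : Wop V ∘L aMinus U V = aMinus U V ∘L Wop V := by
  apply ext_basis; intro ℓ
  simp only [ContinuousLinearMap.comp_apply]
  rcases Int.even_or_odd ℓ with ⟨k, rfl⟩ | ⟨k, rfl⟩
  · rw [aMinus_even U V hU hV k, Wop_e V hV,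
      show (k + k + 2 : ℤ) = (k+1) + (k+1) by ring, aMinus_even U V hU hV (k+1), map_zero]
  · rw [aMinus_odd U V hU hV k, Wop_e V hV, Wop_e V hV,
      show (2*k + 1 + 2 : ℤ) = 2*(k+1) + 1 by ring, aMinus_odd U V hU hV (k+1)]
    congr 1; ring

include hU hV in
lemma W_a₃ : Wop V ∘L a₃ U = a₃ U ∘L Wop V := by
  apply ext_basis; intro ℓ
  simp only [ContinuousLinearMap.comp_apply]
  rcases Int.even_or_odd ℓ with ⟨k, rfl⟩ | ⟨k, rfl⟩
  · rw [a₃_even U hU k, Wop_e V hV, show (k + k + 2 : ℤ) = (k+1) + (k+1) by ring,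
      a₃_even U hU (k+1)]
  · rw [a₃_odd U hU k, map_neg, Wop_e V hV,
      show (2*k + 1 + 2 : ℤ) = 2*(k+1) + 1 by ring, a₃_odd U hU (k+1)]

include hU hV in
lemma Ws_aPlus : Wst V ∘L aPlus U V = aPlus U V ∘L Wst V := by
  apply ext_basis; intro ℓ
  simp only [ContinuousLinearMap.comp_apply]
  rcases Int.even_or_odd ℓ with ⟨k, rfl⟩ | ⟨k, rfl⟩
  · rw [aPlus_even U V hU hV k, Wst_e V hV, Wst_e V hV,
      show (k + k - 2 : ℤ) = (k-1) + (k-1) by ring, aPlus_even U V hU hV (k-1)]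
    congr 1; ring
  · rw [aPlus_odd U V hU hV k, Wst_e V hV,
      show (2*k + 1 - 2 : ℤ) = 2*(k-1) + 1 by ring, aPlus_odd U V hU hV (k-1), map_zero]

include hU hV in
lemma Ws_aMinus : Wst V ∘L aMinus U V = aMinus U V ∘L Wst V := by
  apply ext_basis; intro ℓ
  simp only [ContinuousLinearMap.comp_apply]
  rcases Int.even_or_odd ℓ with ⟨k, rfl⟩ | ⟨k, rfl⟩
  · rw [aMinus_even U V hU hV k, Wst_e V hV,
      show (k + k - 2 : ℤ) = (k-1) + (k-1) by ring, aMinus_even U V hU hV (k-1), map_zero]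
  · rw [aMinus_odd U V hU hV k, Wst_e V hV, Wst_e V hV,
      show (2*k + 1 - 2 : ℤ) = 2*(k-1) + 1 by ring, aMinus_odd U V hU hV (k-1)]
    congr 1; ring

include hU hV in
lemma Ws_a₃ : Wst V ∘L a₃ U = a₃ U ∘L Wst V := by
  apply ext_basis; intro ℓ
  simp only [ContinuousLinearMap.comp_apply]
  rcases Int.even_or_odd ℓ with ⟨k, rfl⟩ | ⟨k, rfl⟩
  · rw [a₃_even U hU k, Wst_e V hV, show (k + k - 2 : ℤ) = (k-1) + (k-1) by ring,
      a₃_even U hU (k-1)]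
  · rw [a₃_odd U hU k, map_neg, Wst_e V hV,
      show (2*k + 1 - 2 : ℤ) = 2*(k-1) + 1 by ring, a₃_odd U hU (k-1)]

include hU hV in
lemma P_aPlus : Pop ∘L aPlus U V = aPlus U V ∘L Pop := by
  apply ext_basis; intro ℓ
  simp only [ContinuousLinearMap.comp_apply]
  rcases Int.even_or_odd ℓ with ⟨k, rfl⟩ | ⟨k, rfl⟩
  · rw [aPlus_even U V hU hV k, Pop_e, Pop_e, map_add, map_smul, map_smul,
      aPlus_em1 U V hU hV, aPlus_e0 U V hU hV, smul_zero, zero_add]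
    by_cases hk : k = 0
    · subst hk; norm_num
    · rw [if_neg (by omega), if_neg (by omega), if_neg (by omega)]; simp
  · rw [aPlus_odd U V hU hV k, Pop_e, map_add, map_smul, map_smul,
      aPlus_em1 U V hU hV, aPlus_e0 U V hU hV, smul_zero, zero_add, map_zero,
      if_neg (by omega), zero_smul]

include hU hV in
lemma P_aMinus : Pop ∘L aMinus U V = aMinus U V ∘L Pop := by
  apply ext_basis; intro ℓ
  simp only [ContinuousLinearMap.comp_apply]
  rcases Int.even_or_odd ℓ with ⟨k, rfl⟩ | ⟨k, rfl⟩
  · rw [aMinus_even U V hU hV k, Pop_e, map_add, map_smul, map_smul,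
      aMinus_em1 U V hU hV, aMinus_e0 U V hU hV, smul_zero, add_zero, map_zero,
      if_neg (by omega), zero_smul]
  · rw [aMinus_odd U V hU hV k, Pop_e, Pop_e, map_add, map_smul, map_smul,
      aMinus_em1 U V hU hV, aMinus_e0 U V hU hV, smul_zero, add_zero]
    by_cases hk : k = -1
    · subst hk; norm_num
    · rw [if_neg (by omega), if_neg (by omega), if_neg (by omega)]; simp

include hU in
lemma P_a₃ : Pop ∘L a₃ U = a₃ U ∘L Pop := by
  apply ext_basis; intro ℓ
  simp only [ContinuousLinearMap.comp_apply]
  rcases Int.even_or_odd ℓ with ⟨k, rfl⟩ | ⟨k, rfl⟩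
  · rw [a₃_even U hU k, Pop_e, map_add, map_smul, map_smul,
      a₃_em1 U hU, a₃_e0 U hU, if_neg (show ¬(-1 : ℤ) = k + k by omega)]
    simp
  · rw [a₃_odd U hU k, map_neg, Pop_e, map_add, map_smul, map_smul,
      a₃_em1 U hU, a₃_e0 U hU, if_neg (show ¬(0 : ℤ) = 2*k + 1 by omega)]
    simp

lemma comm_a₁ {S : H →L[ℂ] H} (hp : S ∘L aPlus U V = aPlus U V ∘L S)
    (hm : S ∘L aMinus U V = aMinus U V ∘L S) :
    S ∘L a₁ U V = a₁ U V ∘L S := by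
  simp only [a₁, ContinuousLinearMap.comp_add, ContinuousLinearMap.add_comp, hp, hm]

lemma comm_a₂ {S : H →L[ℂ] H} (hp : S ∘L aPlus U V = aPlus U V ∘L S)
    (hm : S ∘L aMinus U V = aMinus U V ∘L S) :
    S ∘L a₂ U V = a₂ U V ∘L S := by
  simp only [a₂, ContinuousLinearMap.comp_add, ContinuousLinearMap.add_comp,
    ContinuousLinearMap.comp_smul, ContinuousLinearMap.smul_comp, hp, hm]

end Aux2
section Key

variable (U : ℝ → (H →L[ℂ] H)) (V : unitary (H →L[ℂ] H))
  (hU : ∀ (θ : ℝ) (ℓ : ℤ), U θ (e ℓ) = Complex.exp (Complex.I * ℓ * θ) • e ℓ)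
  (hV : ∀ ℓ : ℤ, (V : H →L[ℂ] H) (e ℓ) = e (ℓ + 1))

lemma two_aPlus : (2 : ℂ) • aPlus U V = a₁ U V + Complex.I • a₂ U V := by
  simp only [a₁, a₂]; match_scalars <;> (try linear_combination Complex.I_sq) <;> linear_combination -Complex.I_sq

lemma two_aMinus : (2 : ℂ) • aMinus U V = a₁ U V - Complex.I • a₂ U V := by
  simp only [a₁, a₂]; match_scalars <;> (try linear_combination Complex.I_sq) <;> linear_combination -Complex.I_sq

include hU hV in
theorem key (T : H →L[ℂ] H)
    (hT1 : T ∘L a₁ U V = a₁ U V ∘L T)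
    (hT2 : T ∘L a₂ U V = a₂ U V ∘L T)
    (hT3 : T ∘L a₃ U = a₃ U ∘L T)
    (hTc : ∀ S : H →L[ℂ] H,
        S ∘L a₁ U V = a₁ U V ∘L S →
        S ∘L a₂ U V = a₂ U V ∘L S →
        S ∘L a₃ U = a₃ U ∘L S →
        T ∘L S = S ∘L T) :
    ∃ c : ℂ, T = c • (1 : H →L[ℂ] H) := by
  -- T commutes with aPlus and aMinus
  have hTp : T ∘L aPlus U V = aPlus U V ∘L T := by
    have h : T ∘L ((2:ℂ) • aPlus U V) = ((2:ℂ) • aPlus U V) ∘L T := by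
      rw [two_aPlus, ContinuousLinearMap.comp_add, ContinuousLinearMap.add_comp,
        ContinuousLinearMap.comp_smul, ContinuousLinearMap.smul_comp, hT1, hT2]
    rw [ContinuousLinearMap.comp_smul, ContinuousLinearMap.smul_comp] at h
    exact smul_right_injective _ (two_ne_zero) h
  have hTm : T ∘L aMinus U V = aMinus U V ∘L T := by
    have h : T ∘L ((2:ℂ) • aMinus U V) = ((2:ℂ) • aMinus U V) ∘L T := by
      rw [two_aMinus, ContinuousLinearMap.comp_sub, ContinuousLinearMap.sub_comp,
        ContinuousLinearMap.comp_smul, ContinuousLinearMap.smul_comp, hT1, hT2]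
    rw [ContinuousLinearMap.comp_smul, ContinuousLinearMap.smul_comp] at h
    exact smul_right_injective _ (two_ne_zero) h
  -- T commutes with the commutant elements
  have hTW : T ∘L Wop V = Wop V ∘L T :=
    hTc _ (comm_a₁ U V (W_aPlus U V hU hV) (W_aMinus U V hU hV))
      (comm_a₂ U V (W_aPlus U V hU hV) (W_aMinus U V hU hV)) (W_a₃ U V hU hV)
  have hTWs : T ∘L Wst V = Wst V ∘L T :=
    hTc _ (comm_a₁ U V (Ws_aPlus U V hU hV) (Ws_aMinus U V hU hV))
      (comm_a₂ U V (Ws_aPlus U V hU hV) (Ws_aMinus U V hU hV)) (Ws_a₃ U V hU hV)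
  have hTP : T ∘L Pop = Pop ∘L T :=
    hTc _ (comm_a₁ U V (P_aPlus U V hU hV) (P_aMinus U V hU hV))
      (comm_a₂ U V (P_aPlus U V hU hV) (P_aMinus U V hU hV)) (P_a₃ U hU)
  set α : ℂ := inner ℂ (e (-1)) (T (e (-1))) with hα
  set β : ℂ := inner ℂ (e 0) (T (e (-1))) with hβ
  set γ : ℂ := inner ℂ (e (-1)) (T (e 0)) with hγ
  set δ : ℂ := inner ℂ (e 0) (T (e 0)) with hδ
  -- block structure from the projection Pop
  have hm1 : T (e (-1)) = α • e (-1) + β • e 0 := by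
    have h := congrArg (fun A : H →L[ℂ] H => A (e (-1))) hTP
    simp only [ContinuousLinearMap.comp_apply] at h
    rw [Pop_e, if_pos rfl, if_neg (by omega), one_smul, zero_smul, add_zero,
      Pop_apply] at h
    exact h
  have hm0 : T (e 0) = γ • e (-1) + δ • e 0 := by
    have h := congrArg (fun A : H →L[ℂ] H => A (e 0)) hTP
    simp only [ContinuousLinearMap.comp_apply] at h
    rw [Pop_e, if_pos rfl, if_neg (by omega), one_smul, zero_smul, zero_add,
      Pop_apply] at h
    exact h
  -- β = 0, from a₃
  have hβ0 : β = 0 := by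
    have h := congrArg (fun A : H →L[ℂ] H => A (e (-1))) hT3
    simp only [ContinuousLinearMap.comp_apply] at h
    rw [a₃_em1 U hU, map_neg, hm1, map_add, map_smul, map_smul,
      a₃_em1 U hU, a₃_e0 U hU] at h
    have hc := congrArg (fun x : H => (x : ∀ _ : ℤ, ℂ) 0) h
    simp only [lp.coeFn_neg, lp.coeFn_add, lp.coeFn_smul, Pi.neg_apply, Pi.add_apply,
      Pi.smul_apply, e_coord, smul_eq_mul] at hc
    norm_num at hc
    linear_combination (-1/2 : ℂ) * hc
  -- γ = 0, from a₃
  have hγ0 : γ = 0 := by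
    have h := congrArg (fun A : H →L[ℂ] H => A (e 0)) hT3
    simp only [ContinuousLinearMap.comp_apply] at h
    rw [a₃_e0 U hU, hm0, map_add, map_smul, map_smul, a₃_em1 U hU, a₃_e0 U hU] at h
    have hc := congrArg (fun x : H => (x : ∀ _ : ℤ, ℂ) (-1)) h
    simp only [lp.coeFn_add, lp.coeFn_smul, Pi.add_apply, Pi.smul_apply, e_coord,
      smul_eq_mul, smul_neg, lp.coeFn_neg, Pi.neg_apply] at hc
    norm_num at hc
    linear_combination (1/2 : ℂ) * hc
  -- α = δ, from aPlus
  have hαδ : δ = α := by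
    have h := congrArg (fun A : H →L[ℂ] H => A (e 0)) hTp
    simp only [ContinuousLinearMap.comp_apply] at h
    rw [aPlus_e0 U V hU hV, hm1, hm0, hβ0, hγ0, zero_smul, add_zero, zero_smul,
      zero_add, map_smul, aPlus_e0 U V hU hV] at h
    have hc := congrArg (fun x : H => (x : ∀ _ : ℤ, ℂ) (-1)) h
    simp only [lp.coeFn_smul, Pi.smul_apply, e_coord, smul_eq_mul] at hc
    norm_num at hc
    exact hc.symm
  have base1 : T (e (-1)) = α • e (-1) := by rw [hm1, hβ0, zero_smul, add_zero]
  have base0 : T (e 0) = α • e 0 := by rw [hm0, hγ0, hαδ, zero_smul, zero_add]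
  -- propagate along the blocks
  have main : ∀ k : ℤ, T (e (k + k)) = α • e (k + k) ∧
      T (e (k + k - 1)) = α • e (k + k - 1) := by
    intro k
    induction k using Int.induction_on with
    | zero => refine ⟨by simpa using base0, by norm_num; simpa using base1⟩
    | succ n ih =>
      have step : ∀ m : ℤ, T (e m) = α • e m → T (e (m + 2)) = α • e (m + 2) := by
        intro m hm
        have h := congrArg (fun A : H →L[ℂ] H => A (e m)) hTW
        simp only [ContinuousLinearMap.comp_apply] at h
        rw [Wop_e V hV, hm, map_smul, Wop_e V hV] at h
        exact h
      constructor
      · have := step _ ih.1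
        rw [show ((n:ℤ) + n + 2) = ((n:ℤ)+1) + ((n:ℤ)+1) by ring] at this
        exact this
      · have := step _ ih.2
        rw [show ((n:ℤ) + n - 1 + 2) = ((n:ℤ)+1) + ((n:ℤ)+1) - 1 by ring] at this
        exact this
    | pred n ih =>
      have step : ∀ m : ℤ, T (e m) = α • e m → T (e (m - 2)) = α • e (m - 2) := by
        intro m hm
        have h := congrArg (fun A : H →L[ℂ] H => A (e m)) hTWs
        simp only [ContinuousLinearMap.comp_apply] at h
        rw [Wst_e V hV, hm, map_smul, Wst_e V hV] at h
        exact h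
      constructor
      · have := step _ ih.1
        rw [show ((-n:ℤ) + -n - 2) = (-(n:ℤ)-1) + (-(n:ℤ)-1) by ring] at this
        exact this
      · have := step _ ih.2
        rw [show ((-n:ℤ) + -n - 1 - 2) = (-(n:ℤ)-1) + (-(n:ℤ)-1) - 1 by ring] at this
        exact this
  have hall : ∀ ℓ : ℤ, T (e ℓ) = α • e ℓ := by
    intro ℓ
    rcases Int.even_or_odd ℓ with ⟨k, rfl⟩ | ⟨k, rfl⟩
    · exact (main k).1
    · have := (main (k+1)).2
      rw [show ((k:ℤ)+1 + (k+1) - 1) = 2*k + 1 by ring] at this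
      exact this
  refine ⟨α, ext_basis fun ℓ => ?_⟩
  rw [hall ℓ, ContinuousLinearMap.smul_apply, ContinuousLinearMap.one_apply]

end Key
/-- **The qubit subalgebra is a factor:** any bounded operator commuting with
`a₁, a₂, a₃` and with every bounded operator that commutes with `a₁, a₂, a₃` is a
scalar multiple of the identity; equivalently, the intersection of the centralizer
of `{a₁, a₂, a₃}` with its own centralizer consists exactly of the scalars. -/
theorem qubit_subalgebra_is_factor
    (U : ℝ → (H →L[ℂ] H)) (V : unitary (H →L[ℂ] H))
    (hU : ∀ (θ : ℝ) (ℓ : ℤ), U θ (e ℓ) = Complex.exp (Complex.I * ℓ * θ) • e ℓ)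
    (hV : ∀ ℓ : ℤ, (V : H →L[ℂ] H) (e ℓ) = e (ℓ + 1)) :
    (∀ T : H →L[ℂ] H,
      T ∘L a₁ U V = a₁ U V ∘L T →
      T ∘L a₂ U V = a₂ U V ∘L T →
      T ∘L a₃ U = a₃ U ∘L T →
      (∀ S : H →L[ℂ] H,
        S ∘L a₁ U V = a₁ U V ∘L S →
        S ∘L a₂ U V = a₂ U V ∘L S →
        S ∘L a₃ U = a₃ U ∘L S →
        T ∘L S = S ∘L T) →
      ∃ c : ℂ, T = c • (1 : H →L[ℂ] H)) ∧
    Set.centralizer ({a₁ U V, a₂ U V, a₃ U} : Set (H →L[ℂ] H)) ∩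
        Set.centralizer (Set.centralizer ({a₁ U V, a₂ U V, a₃ U} : Set (H →L[ℂ] H))) =
      Set.range (fun c : ℂ => c • (1 : H →L[ℂ] H)) := by
  refine ⟨fun T h1 h2 h3 hc => key U V hU hV T h1 h2 h3 hc, ?_⟩
  ext S
  simp only [Set.mem_inter_iff, Set.mem_range]
  constructor
  · rintro ⟨hc, hcc⟩
    rw [Set.mem_centralizer_iff] at hc hcc
    have h1 : S ∘L a₁ U V = a₁ U V ∘L S :=
      (hc _ (by simp)).symm
    have h2 : S ∘L a₂ U V = a₂ U V ∘L S :=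
      (hc _ (by simp)).symm
    have h3 : S ∘L a₃ U = a₃ U ∘L S :=
      (hc _ (by simp)).symm
    have hcomm : ∀ S' : H →L[ℂ] H,
        S' ∘L a₁ U V = a₁ U V ∘L S' →
        S' ∘L a₂ U V = a₂ U V ∘L S' →
        S' ∘L a₃ U = a₃ U ∘L S' →
        S ∘L S' = S' ∘L S := by
      intro S' h1' h2' h3'
      have hmem : S' ∈ Set.centralizer ({a₁ U V, a₂ U V, a₃ U} : Set (H →L[ℂ] H)) := by
        rw [Set.mem_centralizer_iff]
        rintro m hm
        simp only [Set.mem_insert_iff, Set.mem_singleton_iff] at hm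
        rcases hm with rfl | rfl | rfl
        exacts [h1'.symm, h2'.symm, h3'.symm]
      exact (hcc S' hmem).symm
    obtain ⟨c, hcT⟩ := key U V hU hV S h1 h2 h3 hcomm
    exact ⟨c, hcT.symm⟩
  · rintro ⟨c, rfl⟩
    constructor
    · rw [Set.mem_centralizer_iff]
      intro m _
      rw [mul_smul_comm, smul_mul_assoc, mul_one, one_mul]
    · rw [Set.mem_centralizer_iff]
      intro m _
      rw [mul_smul_comm, smul_mul_assoc, mul_one, one_mul]
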